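/- Let n ≥ 2. If F ⊆ S_n is a family of permutations such that for any σ, π ∈ F there exists i with σ(i) = π(i), then |F| ≤ (n-1)!. -/

import Mathlib

open Fin.NatCast

lemma finRotate_pow_apply (m j : ℕ) (i : Fin (m + 1)) :
    ((finRotate (m + 1)) ^ j) i = i + (j : Fin (m + 1)) := by
  induction j with
  | zero => simp
  | succ k ih =>
      rw [pow_succ', Equiv.Perm.mul_apply, ih, finRotate_succ_apply]
      push_cast
      rw [add_assoc]

lemma finRotate_pow_eq_one_of_fixed (m j : ℕ) (i : Fin (m + 1))
    (h : ((finRotate (m + 1)) ^ j) i = i) : (finRotate (m + 1)) ^ j = 1 := by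
  rw [finRotate_pow_apply] at h
  have hj : (j : Fin (m + 1)) = 0 := by
    have := congrArg (fun x => x - i) h
    simpa [add_comm, add_sub_cancel_right] using this
  ext x
  simp [finRotate_pow_apply, hj]

lemma orderOf_finRotate' (m : ℕ) : orderOf (finRotate (m + 1)) = m + 1 := by
  rw [orderOf_eq_iff (Nat.succ_pos m)]
  constructor
  · ext x
    simp [finRotate_pow_apply]
  · intro k hk hk0 h1
    have : ((finRotate (m + 1)) ^ k) 0 = 0 := by rw [h1]; rfl
    rw [finRotate_pow_apply, zero_add] at this
    have : (k : Fin (m + 1)) = 0 := this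
    rw [Fin.natCast_eq_zero] at this
    exact absurd (Nat.le_of_dvd hk0 this) (by omega)

theorem ekr_perm_bound (n : ℕ) (hn : 2 ≤ n)
    (F : Finset (Equiv.Perm (Fin n)))
    (hint : ∀ σ ∈ F, ∀ π ∈ F, ∃ i : Fin n, σ i = π i) :
    F.card ≤ (n - 1).factorial := by
  classical
  obtain ⟨m, rfl⟩ : ∃ m, n = m + 1 := ⟨n - 1, by omega⟩
  set c := finRotate (m + 1) with hc
  set H := Subgroup.zpowers c with hH
  -- the quotient map is injective on F
  have hinj : Set.InjOn (QuotientGroup.mk (s := H)) F := by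
    intro σ hσ π hπ hq
    have hmem : σ⁻¹ * π ∈ H := QuotientGroup.eq.mp hq
    obtain ⟨j, hj⟩ := mem_powers_iff_mem_zpowers.mpr hmem
    simp only at hj
    obtain ⟨i, hi⟩ := hint σ hσ π hπ
    have hπ' : π = σ * c ^ j := by rw [hj]; group
    have hfix : (c ^ j) i = i := by
      have : σ ((c ^ j) i) = σ i := by
        rw [← Equiv.Perm.mul_apply, ← hπ', ← hi]
      exact σ.injective this
    have hone : c ^ j = 1 := finRotate_pow_eq_one_of_fixed m j i hfix
    rw [hπ', hone, mul_one]
  -- cardinality of the quotient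
  have hcardH : Nat.card H = m + 1 := by
    rw [hH, Nat.card_zpowers, hc, orderOf_finRotate']
  have hcardG : Nat.card (Equiv.Perm (Fin (m + 1))) = (m + 1).factorial := by
    simp [Nat.card_eq_fintype_card, Fintype.card_perm]
  have hquot : Nat.card (Equiv.Perm (Fin (m + 1)) ⧸ H) = m.factorial := by
    have := Subgroup.card_eq_card_quotient_mul_card_subgroup H
    rw [hcardH, hcardG, Nat.factorial_succ] at this
    have hpos : 0 < m + 1 := Nat.succ_pos m
    nlinarith [this]
  calc F.card = (F.image (QuotientGroup.mk (s := H))).card :=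
        (Finset.card_image_of_injOn hinj).symm
    _ ≤ Fintype.card (Equiv.Perm (Fin (m + 1)) ⧸ H) := Finset.card_le_univ _
    _ = m.factorial := by rw [← Nat.card_eq_fintype_card, hquot]
    _ = (m + 1 - 1).factorial := by simp
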